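/- Unit cut: if ⊩_B^L 1 and ⊩_B^K χ, then ⊩_B^{L⊎K} χ. -/
import Mathlib


abbrev Atom := ℕ
abbrev ASeq := Multiset Atom × Atom
abbrev Box := Multiset ASeq
abbrev ARule := Multiset Box × Box × Atom
abbrev Base := Set ARule

/-- An atom `d` is persistent in `B` if there is a rule `⟨∅, S, d⟩ ∈ B` with `S` nonempty. -/
def Persistent (B : Base) (d : Atom) : Prop :=
  ∃ S : Box, S ≠ 0 ∧ ((0 : Multiset Box), S, d) ∈ B

/-- Atomic derivability in a base. -/
inductive Deriv (B : Base) : Multiset Atom → Atom → Prop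
  | ref (p : Atom) : Deriv B {p} p
  | app (S : Box) (p : Atom)
      (bc : List (Box × Multiset Atom))
      (dc : List (Atom × Multiset Atom))
      (hrule : ((↑(bc.map Prod.fst) : Multiset Box), S, p) ∈ B)
      (hpers : ∀ x ∈ dc, Persistent B x.1)
      (hbox : ∀ x ∈ bc, ∀ s ∈ x.1, Deriv B (x.2 + s.1) s.2)
      (hd : ∀ x ∈ dc, Deriv B x.2 x.1)
      (hS : ∀ s ∈ S, Deriv B ((↑(dc.map Prod.fst) : Multiset Atom) + s.1) s.2) :
      Deriv B ((bc.map Prod.snd).sum + (dc.map Prod.snd).sum) p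

/-- Formulas of intuitionistic linear logic. -/
inductive Fml : Type
  | atom : Atom → Fml
  | top : Fml
  | zero : Fml
  | one : Fml
  | limp : Fml → Fml → Fml
  | tens : Fml → Fml → Fml
  | wth : Fml → Fml → Fml
  | plus : Fml → Fml → Fml
  | bang : Fml → Fml
deriving DecidableEq

/-- The degree of a formula. -/
def deg : Fml → ℕ
  | .atom _ => 1
  | .top => 2
  | .zero => 2
  | .one => 2
  | .limp φ ψ => deg φ + deg ψ + 1
  | .tens φ ψ => deg φ + deg ψ + 1
  | .wth φ ψ => deg φ + deg ψ + 1
  | .plus φ ψ => deg φ + deg ψ + 1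
  | .bang φ => deg φ + 1

theorem one_le_deg (φ : Fml) : 1 ≤ deg φ := by
  cases φ <;> simp [deg] <;> omega

mutual
  /-- Support `⊩_B^L φ` (empty left-hand side). -/
  def Supp : Base → Multiset Atom → Fml → Prop
    | B, L, .atom p => Deriv B L p
    | _, _, .top => True
    | B, L, .zero => ∀ (K : Multiset Atom) (p : Atom), Supp B (L + K) (.atom p)
    | B, L, .one => ∀ C : Base, B ⊆ C → ∀ (K : Multiset Atom) (p : Atom),
        Supp C K (.atom p) → Supp C (L + K) (.atom p)
    | B, L, .limp φ ψ => SuppInf1 B L φ ψ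
    | B, L, .tens φ ψ => ∀ C : Base, B ⊆ C → ∀ (K : Multiset Atom) (p : Atom),
        SuppInf2 C K φ ψ (.atom p) → Supp C (L + K) (.atom p)
    | B, L, .wth φ ψ => Supp B L φ ∧ Supp B L ψ
    | B, L, .plus φ ψ => ∀ C : Base, B ⊆ C → ∀ (K : Multiset Atom) (p : Atom),
        SuppInf1 C K φ (.atom p) → SuppInf1 C K ψ (.atom p) → Supp C (L + K) (.atom p)
    | B, L, .bang φ => ∀ C : Base, B ⊆ C → ∀ (K : Multiset Atom) (p : Atom),
        (∀ D : Base, C ⊆ D → Supp D 0 φ → Supp D K (.atom p)) → Supp C (L + K) (.atom p)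
  termination_by B L φ => 2 * deg φ
  decreasing_by
    all_goals
      try simp only [deg]
      try have h1 := one_le_deg φ
      try have h2 := one_le_deg ψ
      try have h3 := one_le_deg χ
      try have h4 := one_le_deg α
      try have h5 := one_le_deg β
      omega

  /-- The (Inf) clause for a singleton context `{φ} ⊩_B^L χ`. -/
  def SuppInf1 : Base → Multiset Atom → Fml → Fml → Prop
    | B, L, .bang α, χ => ∀ C : Base, B ⊆ C → Supp C 0 α → Supp C L χ
    | B, L, φ, χ => ∀ C : Base, B ⊆ C → ∀ K : Multiset Atom,
        Supp C K φ → Supp C (L + K) χ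
  termination_by B L φ χ => 2 * (deg φ + deg χ) - 1
  decreasing_by
    all_goals
      try simp only [deg]
      try have h1 := one_le_deg φ
      try have h2 := one_le_deg ψ
      try have h3 := one_le_deg χ
      try have h4 := one_le_deg α
      try have h5 := one_le_deg β
      omega

  /-- The (Inf) clause for a two-element context `{φ, ψ} ⊩_B^L χ`. -/
  def SuppInf2 : Base → Multiset Atom → Fml → Fml → Fml → Prop
    | B, L, .bang α, .bang β, χ => ∀ C : Base, B ⊆ C →
        Supp C 0 α → Supp C 0 β → Supp C L χ
    | B, L, .bang α, ψ, χ => ∀ C : Base, B ⊆ C → ∀ K : Multiset Atom,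
        Supp C 0 α → Supp C K ψ → Supp C (L + K) χ
    | B, L, φ, .bang β, χ => ∀ C : Base, B ⊆ C → ∀ K : Multiset Atom,
        Supp C 0 β → Supp C K φ → Supp C (L + K) χ
    | B, L, φ, ψ, χ => ∀ C : Base, B ⊆ C → ∀ K₁ K₂ : Multiset Atom,
        Supp C K₁ φ → Supp C K₂ ψ → Supp C (L + K₁ + K₂) χ
  termination_by B L φ ψ χ => 2 * (deg φ + deg ψ + deg χ) - 1
  decreasing_by
    all_goals
      try simp only [deg]
      try have h1 := one_le_deg φ
      try have h2 := one_le_deg ψ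
      try have h3 := one_le_deg χ
      try have h4 := one_le_deg α
      try have h5 := one_le_deg β
      omega
end

/-- Is the formula a `!`-formula? -/
def isBang : Fml → Bool
  | .bang _ => true
  | _ => false

/-- Strip a top-level `!`. -/
def unbang : Fml → Fml
  | .bang φ => φ
  | φ => φ

/-- Support for a multiset of formulas: the `(⊎)` clause. -/
def SuppMS (B : Base) (L : Multiset Atom) (Γ : Multiset Fml) : Prop :=
  ∃ l : List (Fml × Multiset Atom), (↑(l.map Prod.fst) : Multiset Fml) = Γ ∧
    (l.map Prod.snd).sum = L ∧ ∀ x ∈ l, Supp B x.2 x.1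

/-- The official (Inf) clause: `Γ ⊩_B^L φ`, where `Γ = !Δ ⊎ Θ`. -/
def SuppSeq (B : Base) (L : Multiset Atom) (Γ : Multiset Fml) (φ : Fml) : Prop :=
  ∀ C : Base, B ⊆ C → ∀ K : Multiset Atom,
    SuppMS C 0 ((Γ.filter (fun ψ => isBang ψ = true)).map unbang) →
    SuppMS C K (Γ.filter (fun ψ => isBang ψ = false)) →
    Supp C (L + K) φ

/-- Validity of a sequent `(Γ : φ)`. -/
def Valid (Γ : Multiset Fml) (φ : Fml) : Prop :=
  ∀ B : Base, SuppSeq B 0 Γ φ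


lemma one_mono {B C : Base} {L : Multiset Atom} (hBC : B ⊆ C)
    (h : Supp B L .one) : Supp C L .one := by
  rw [Supp] at h ⊢
  intro D hCD K p hp
  exact h D (hBC.trans hCD) K p hp

theorem unit_cut (B : Base) (L K : Multiset Atom) (χ : Fml)
    (h1 : Supp B L .one) (h2 : Supp B K χ) :
    Supp B (L + K) χ := by
  induction χ generalizing B L K with
  | atom p =>
      rw [Supp] at h1
      exact h1 B subset_rfl K p h2
  | top => rw [Supp]; trivial
  | zero =>
      rw [Supp] at h1
      rw [Supp] at h2 ⊢
      intro K' p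
      have := h1 B subset_rfl (K + K') p (h2 K' p)
      rwa [← add_assoc] at this
  | one =>
      rw [Supp] at h1
      rw [Supp] at h2 ⊢
      intro C hC K' p hp
      have := h1 C hC (K + K') p (h2 C hC K' p hp)
      rwa [← add_assoc] at this
  | limp φ ψ ihφ ihψ =>
      rw [Supp] at h2 ⊢
      cases φ with
      | bang α =>
          rw [SuppInf1] at h2 ⊢
          intro C hC hα
          exact ihψ C L K (one_mono hC h1) (h2 C hC hα)
      | atom p =>
          rw [SuppInf1] at h2 ⊢
          · intro C hC K' hφ
            rw [add_assoc]
            exact ihψ C L (K + K') (one_mono hC h1) (h2 C hC K' hφ)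
          all_goals (intro a ha; exact Fml.noConfusion ha)
      | top =>
          rw [SuppInf1] at h2 ⊢
          · intro C hC K' hφ
            rw [add_assoc]
            exact ihψ C L (K + K') (one_mono hC h1) (h2 C hC K' hφ)
          all_goals (intro a ha; exact Fml.noConfusion ha)
      | zero =>
          rw [SuppInf1] at h2 ⊢
          · intro C hC K' hφ
            rw [add_assoc]
            exact ihψ C L (K + K') (one_mono hC h1) (h2 C hC K' hφ)
          all_goals (intro a ha; exact Fml.noConfusion ha)
      | one =>
          rw [SuppInf1] at h2 ⊢
          · intro C hC K' hφ
            rw [add_assoc]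
            exact ihψ C L (K + K') (one_mono hC h1) (h2 C hC K' hφ)
          all_goals (intro a ha; exact Fml.noConfusion ha)
      | limp a b =>
          rw [SuppInf1] at h2 ⊢
          · intro C hC K' hφ
            rw [add_assoc]
            exact ihψ C L (K + K') (one_mono hC h1) (h2 C hC K' hφ)
          all_goals (intro a ha; exact Fml.noConfusion ha)
      | tens a b =>
          rw [SuppInf1] at h2 ⊢
          · intro C hC K' hφ
            rw [add_assoc]
            exact ihψ C L (K + K') (one_mono hC h1) (h2 C hC K' hφ)
          all_goals (intro a ha; exact Fml.noConfusion ha)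
      | wth a b =>
          rw [SuppInf1] at h2 ⊢
          · intro C hC K' hφ
            rw [add_assoc]
            exact ihψ C L (K + K') (one_mono hC h1) (h2 C hC K' hφ)
          all_goals (intro a ha; exact Fml.noConfusion ha)
      | plus a b =>
          rw [SuppInf1] at h2 ⊢
          · intro C hC K' hφ
            rw [add_assoc]
            exact ihψ C L (K + K') (one_mono hC h1) (h2 C hC K' hφ)
          all_goals (intro a ha; exact Fml.noConfusion ha)
  | tens φ ψ ihφ ihψ =>
      rw [Supp] at h1
      rw [Supp] at h2 ⊢
      intro C hC K' p hp
      have := h1 C hC (K + K') p (h2 C hC K' p hp)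
      rwa [← add_assoc] at this
  | wth φ ψ ihφ ihψ =>
      rw [Supp] at h2 ⊢
      exact ⟨ihφ B L K h1 h2.1, ihψ B L K h1 h2.2⟩
  | plus φ ψ ihφ ihψ =>
      rw [Supp] at h1
      rw [Supp] at h2 ⊢
      intro C hC K' p hpφ hpψ
      have := h1 C hC (K + K') p (h2 C hC K' p hpφ hpψ)
      rwa [← add_assoc] at this
  | bang φ ihφ =>
      rw [Supp] at h1
      rw [Supp] at h2 ⊢
      intro C hC K' p hp
      have := h1 C hC (K + K') p (h2 C hC K' p hp)
      rwa [← add_assoc] at this
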